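/- In the continuous similarity-caching setting with constant request rate λ > 0 over a compact set X ⊆ ℝ^p, for every cache state S consisting of k points y_1,…,y_k ∈ X, the expected cost satisfies 𝒞(S) = λ ∫_X min_{1≤h≤k} c(x − y_h) dx ≥ λ k F(|X|/k), where c(z) = min(h(‖z‖), C_r) and F(v) = ∫_{B(0,v)} c(z) dz. -/
import Mathlib


open MeasureTheory Metric
open scoped ENNReal

/-- In the continuous similarity-caching setting with constant request rate
`λ > 0` over a compact set `X`, for every cache state `S = {y_1,…,y_k} ⊆ X`,
`𝒞(S) = λ ∫_X min_h c (x - y_h) dx ≥ λ k F(|X|/k)`, where `c z = min (h ‖z‖) C_r` and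
`F v = ∫_{B(0,v)} c z dz` (the ball `B(0,v)` of volume `v` has radius `R v`). -/
theorem stmt2 {E : Type*} [NormedAddCommGroup E] [NormedSpace ℝ E]
    [MeasurableSpace E] [BorelSpace E] [FiniteDimensional ℝ E]
    (μ : Measure E) [μ.IsAddHaarMeasure]
    (h : ℝ → ℝ) (hmono : Monotone h) (hnonneg : ∀ d, 0 ≤ h d)
    (Cr : ℝ) (hCr : 0 < Cr)
    (X : Set E) (hX : IsCompact X)
    (lam : ℝ) (hlam : 0 < lam)
    (k : ℕ) (hk : 0 < k)
    (S : Fin k → E) (hS : ∀ i, S i ∈ X)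
    (R : ℝ → ℝ) (hRnonneg : ∀ v ∈ Set.Ici (0 : ℝ), 0 ≤ R v)
    (hR : ∀ v ∈ Set.Ici (0 : ℝ), μ (closedBall (0 : E) (R v)) = ENNReal.ofReal v) :
    lam * (k : ℝ) *
        ∫ z in closedBall (0 : E) (R ((μ X).toReal / k)), min (h ‖z‖) Cr ∂μ ≤
      lam * ∫ x in X, ⨅ i : Fin k, min (h ‖x - S i‖) Cr ∂μ := by
  classical
  have hkne : (k : ℝ) ≠ 0 := Nat.cast_ne_zero.mpr hk.ne'
  set V : ℝ := (μ X).toReal / k with hVdef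
  set B : Set E := closedBall (0 : E) (R V) with hBdef
  set c : E → ℝ := fun z => min (h ‖z‖) Cr with hcdef
  set f : E → ℝ := fun x => ⨅ i : Fin k, c (x - S i) with hfdef
  haveI : Nonempty (Fin k) := ⟨⟨0, hk⟩⟩
  have hcmeas : Measurable c := (hmono.measurable.comp measurable_norm).min measurable_const
  have hcnn : ∀ z, 0 ≤ c z := fun z => le_min (hnonneg _) hCr.le
  have hcle : ∀ z, c z ≤ Cr := fun z => min_le_right _ _
  have hfmeas : Measurable f :=
    Measurable.iInf fun i => hcmeas.comp (measurable_sub_const _)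
  have hbdd : ∀ x, BddBelow (Set.range fun i : Fin k => c (x - S i)) :=
    fun x => ⟨0, by rintro _ ⟨i, rfl⟩; exact hcnn _⟩
  have hfnn : ∀ x, 0 ≤ f x := fun x => le_ciInf fun i => hcnn _
  have hfle : ∀ x, f x ≤ Cr := fun x =>
    (ciInf_le (hbdd x) (⟨0, hk⟩ : Fin k)).trans (hcle _)
  have hXm : MeasurableSet X := hX.measurableSet
  have hBm : MeasurableSet B := measurableSet_closedBall
  have hXfin : μ X ≠ ⊤ := hX.measure_lt_top.ne
  have hVnn : (0 : ℝ) ≤ V := div_nonneg ENNReal.toReal_nonneg (Nat.cast_nonneg k)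
  have hμB : μ B = ENNReal.ofReal V := hR V hVnn
  have hμBfin : μ B ≠ ⊤ := by rw [hμB]; exact ENNReal.ofReal_ne_top
  have hkB : (k : ℝ≥0∞) * μ B = μ X := by
    rw [hμB, ← ENNReal.ofReal_natCast, ← ENNReal.ofReal_mul (Nat.cast_nonneg k), hVdef,
      mul_div_cancel₀ _ hkne, ENNReal.ofReal_toReal hXfin]
  -- key pointwise inequality on measures of superlevel sets
  have key : ∀ t : ℝ,
      (k : ℝ≥0∞) * μ ({z | t < c z} ∩ B) ≤ μ ({x | t < f x} ∩ X) := by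
    intro t
    set A : Set E := {z | c z ≤ t} with hAdef
    have hAm : MeasurableSet A := hcmeas measurableSet_Iic
    have hAdown : ∀ z ∈ A, ∀ w : E, ‖w‖ ≤ ‖z‖ → w ∈ A := by
      intro z hz w hw
      exact le_trans (min_le_min (hmono hw) le_rfl) hz
    by_cases hBA : B ⊆ A
    · have : {z | t < c z} ∩ B = ∅ := by
        ext z
        simp only [Set.mem_inter_iff, Set.mem_setOf_eq, Set.mem_empty_iff_false, iff_false,
          not_and]
        intro hz hzB
        exact absurd (hBA hzB) (not_le.mpr hz)
      simp [this]
    · obtain ⟨b, hbB, hbA⟩ := Set.not_subset.mp hBA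
      have hAB : A ⊆ B := by
        intro a ha
        have hab : ‖a‖ ≤ ‖b‖ := by
          by_contra hlt
          exact hbA (hAdown a ha b (le_of_not_ge hlt))
        have : ‖b‖ ≤ R V := by
          have := hbB
          simp only [hBdef, mem_closedBall, dist_zero_right] at this
          exact this
        simp only [hBdef, mem_closedBall, dist_zero_right]
        exact hab.trans this
      have hμAfin : μ A ≠ ⊤ := ((measure_mono hAB).trans_lt (hμB ▸ ENNReal.ofReal_lt_top)).ne
      have hcompl : {z | t < c z} ∩ B = B \ A := by
        ext z
        constructor
        · rintro ⟨h1, h2⟩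
          have h1' : t < c z := h1
          exact ⟨h2, fun hzA => absurd h1' (not_lt.mpr (show c z ≤ t from hzA))⟩
        · rintro ⟨h1, h2⟩
          have h2' : ¬ c z ≤ t := fun hc => h2 (show z ∈ A from hc)
          exact ⟨show t < c z from lt_of_not_ge h2', h1⟩
      have hμdiff : μ (B \ A) = μ B - μ A :=
        measure_diff hAB hAm.nullMeasurableSet hμAfin
      -- union bound on the other side
      have hsub : {x | f x ≤ t} ∩ X ⊆ ⋃ i : Fin k, {x | c (x - S i) ≤ t} := by
        rintro x ⟨hx, -⟩
        obtain ⟨i₀, hi₀⟩ := Finite.exists_min fun i : Fin k => c (x - S i)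
        have : f x = c (x - S i₀) :=
          le_antisymm (ciInf_le (hbdd x) i₀) (le_ciInf hi₀)
        exact Set.mem_iUnion.mpr ⟨i₀, by simpa [this] using hx⟩
      have htrans : ∀ i : Fin k, μ {x | c (x - S i) ≤ t} = μ A := by
        intro i
        have : {x | c (x - S i) ≤ t} = (fun x => x + (-S i)) ⁻¹' A := by
          ext x; simp [hAdef, sub_eq_add_neg]
        rw [this, measure_preimage_add_right]
      have hunion : μ ({x | f x ≤ t} ∩ X) ≤ (k : ℝ≥0∞) * μ A := by
        calc μ ({x | f x ≤ t} ∩ X) ≤ μ (⋃ i : Fin k, {x | c (x - S i) ≤ t}) :=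
              measure_mono hsub
          _ ≤ ∑ i : Fin k, μ {x | c (x - S i) ≤ t} := measure_iUnion_fintype_le _ _
          _ = (k : ℝ≥0∞) * μ A := by simp [htrans, Finset.sum_const, mul_comm]
      have hXsplit : μ ({x | t < f x} ∩ X) = μ X - μ ({x | f x ≤ t} ∩ X) := by
        have hset : {x | t < f x} ∩ X = X \ ({x | f x ≤ t} ∩ X) := by
          ext x
          constructor
          · rintro ⟨h1, h2⟩
            have h1' : t < f x := h1
            exact ⟨h2, fun hc => absurd h1' (not_lt.mpr (show f x ≤ t from hc.1))⟩
          · rintro ⟨h1, h2⟩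
            have : ¬ f x ≤ t := fun hc => h2 ⟨show x ∈ {x | f x ≤ t} from hc, h1⟩
            exact ⟨show t < f x from lt_of_not_ge this, h1⟩
        rw [hset]
        exact measure_diff Set.inter_subset_right
          ((hfmeas measurableSet_Iic).inter hXm).nullMeasurableSet
          (((measure_mono Set.inter_subset_right).trans_lt (lt_of_le_of_ne le_top hXfin)).ne)
      calc (k : ℝ≥0∞) * μ ({z | t < c z} ∩ B) = (k : ℝ≥0∞) * (μ B - μ A) := by
            rw [hcompl, hμdiff]
        _ = (k : ℝ≥0∞) * μ B - (k : ℝ≥0∞) * μ A :=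
            ENNReal.mul_sub (fun _ _ => ENNReal.natCast_ne_top k)
        _ = μ X - (k : ℝ≥0∞) * μ A := by rw [hkB]
        _ ≤ μ X - μ ({x | f x ≤ t} ∩ X) := tsub_le_tsub_left hunion _
        _ = μ ({x | t < f x} ∩ X) := hXsplit.symm
  -- layer cake on both sides
  have hLayerB : ∫⁻ z in B, ENNReal.ofReal (c z) ∂μ
      = ∫⁻ t in Set.Ioi (0 : ℝ), μ ({z | t < c z} ∩ B) := by
    rw [lintegral_eq_lintegral_meas_lt (μ.restrict B) (ae_of_all _ hcnn) hcmeas.aemeasurable]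
    exact lintegral_congr fun t => Measure.restrict_apply (hcmeas measurableSet_Ioi)
  have hLayerX : ∫⁻ x in X, ENNReal.ofReal (f x) ∂μ
      = ∫⁻ t in Set.Ioi (0 : ℝ), μ ({x | t < f x} ∩ X) := by
    rw [lintegral_eq_lintegral_meas_lt (μ.restrict X) (ae_of_all _ hfnn) hfmeas.aemeasurable]
    exact lintegral_congr fun t => Measure.restrict_apply (hfmeas measurableSet_Ioi)
  have hmain : (k : ℝ≥0∞) * ∫⁻ z in B, ENNReal.ofReal (c z) ∂μ
      ≤ ∫⁻ x in X, ENNReal.ofReal (f x) ∂μ := by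
    rw [hLayerB, hLayerX, ← lintegral_const_mul' _ _ (ENNReal.natCast_ne_top k)]
    exact lintegral_mono fun t => key t
  have hXint_fin : (∫⁻ x in X, ENNReal.ofReal (f x) ∂μ) ≠ ⊤ := by
    have : ∫⁻ x in X, ENNReal.ofReal (f x) ∂μ ≤ ENNReal.ofReal Cr * μ X := by
      calc ∫⁻ x in X, ENNReal.ofReal (f x) ∂μ
          ≤ ∫⁻ _ in X, ENNReal.ofReal Cr ∂μ :=
            lintegral_mono fun x => ENNReal.ofReal_le_ofReal (hfle x)
        _ = ENNReal.ofReal Cr * μ X := by rw [setLIntegral_const]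
    exact (this.trans_lt (ENNReal.mul_lt_top ENNReal.ofReal_lt_top
      (lt_of_le_of_ne le_top hXfin))).ne
  have h1 : ∫ z in B, c z ∂μ = (∫⁻ z in B, ENNReal.ofReal (c z) ∂μ).toReal :=
    integral_eq_lintegral_of_nonneg_ae (ae_of_all _ hcnn) hcmeas.aestronglyMeasurable
  have h2 : ∫ x in X, f x ∂μ = (∫⁻ x in X, ENNReal.ofReal (f x) ∂μ).toReal :=
    integral_eq_lintegral_of_nonneg_ae (ae_of_all _ hfnn) hfmeas.aestronglyMeasurable
  have hreal : (k : ℝ) * (∫⁻ z in B, ENNReal.ofReal (c z) ∂μ).toReal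
      ≤ (∫⁻ x in X, ENNReal.ofReal (f x) ∂μ).toReal := by
    have := ENNReal.toReal_mono hXint_fin hmain
    rwa [ENNReal.toReal_mul, ENNReal.toReal_natCast] at this
  show lam * (k : ℝ) * ∫ z in B, c z ∂μ ≤ lam * ∫ x in X, f x ∂μ
  rw [h1, h2, mul_assoc]
  exact mul_le_mul_of_nonneg_left hreal hlam.le
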